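/- Let A be a unital ring and e ∈ A an idempotent. The assignment S ↦ eS gives a bijection between isomorphism classes of simple left A-modules with eS ≠ 0 and isomorphism classes of simple left eAe-modules. -/

import Mathlib

/-- The corner ring `eAe`, realized as the set of elements fixed by left and right
multiplication by the idempotent `e`. -/
def Corner {A : Type*} [Ring A] (e : A) (_he : e * e = e) : Type _ :=
  {x : A // e * x = x ∧ x * e = x}

namespace Corner

variable {A : Type*} [Ring A] {e : A} {he : e * e = e}

instance : Add (Corner e he) :=
  ⟨fun x y => ⟨x.1 + y.1, by rw [mul_add, x.2.1, y.2.1], by rw [add_mul, x.2.2, y.2.2]⟩⟩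
instance : Zero (Corner e he) := ⟨⟨0, by simp, by simp⟩⟩
instance : Neg (Corner e he) :=
  ⟨fun x => ⟨-x.1, by rw [mul_neg, x.2.1], by rw [neg_mul, x.2.2]⟩⟩
instance : Mul (Corner e he) :=
  ⟨fun x y => ⟨x.1 * y.1, by rw [← mul_assoc, x.2.1], by rw [mul_assoc, y.2.2]⟩⟩
instance : One (Corner e he) := ⟨⟨e, he, he⟩⟩

instance : Ring (Corner e he) where
  add_assoc a b c := Subtype.ext (add_assoc a.1 b.1 c.1)
  zero_add a := Subtype.ext (zero_add a.1)
  add_zero a := Subtype.ext (add_zero a.1)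
  add_comm a b := Subtype.ext (add_comm a.1 b.1)
  neg_add_cancel a := Subtype.ext (neg_add_cancel a.1)
  mul_assoc a b c := Subtype.ext (mul_assoc a.1 b.1 c.1)
  one_mul a := Subtype.ext a.2.1
  mul_one a := Subtype.ext a.2.2
  left_distrib a b c := Subtype.ext (left_distrib a.1 b.1 c.1)
  right_distrib a b c := Subtype.ext (right_distrib a.1 b.1 c.1)
  zero_mul a := Subtype.ext (zero_mul a.1)
  mul_zero a := Subtype.ext (mul_zero a.1)
  nsmul := nsmulRec
  zsmul := zsmulRec

@[simp] theorem one_val : (1 : Corner e he).1 = e := rfl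
@[simp] theorem mul_val (x y : Corner e he) : (x * y : Corner e he).1 = x.1 * y.1 := rfl
@[simp] theorem add_val (x y : Corner e he) : (x + y : Corner e he).1 = x.1 + y.1 := rfl

end Corner

/-- For a left `A`-module `M`, the abelian group `eM = {e • m : m ∈ M}`, realized as the
set of elements fixed by the action of the idempotent `e`. -/
def eMod {A : Type*} [Ring A] (e : A) (_he : e * e = e) (M : Type*) [AddCommGroup M]
    [Module A M] : Type _ := {m : M // e • m = m}

namespace eMod

variable {A : Type*} [Ring A] {e : A} {he : e * e = e} {M : Type*} [AddCommGroup M] [Module A M]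

instance : Add (eMod e he M) := ⟨fun x y => ⟨x.1 + y.1, by rw [smul_add, x.2, y.2]⟩⟩
instance : Zero (eMod e he M) := ⟨⟨0, by simp⟩⟩
instance : Neg (eMod e he M) := ⟨fun x => ⟨-x.1, by rw [smul_neg, x.2]⟩⟩

instance : AddCommGroup (eMod e he M) where
  add_assoc a b c := Subtype.ext (add_assoc a.1 b.1 c.1)
  zero_add a := Subtype.ext (zero_add a.1)
  add_zero a := Subtype.ext (add_zero a.1)
  add_comm a b := Subtype.ext (add_comm a.1 b.1)
  neg_add_cancel a := Subtype.ext (neg_add_cancel a.1)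
  nsmul := nsmulRec
  zsmul := zsmulRec

instance : SMul (Corner e he) (eMod e he M) :=
  ⟨fun c m => ⟨c.1 • m.1, by rw [← mul_smul, c.2.1]⟩⟩

/-- `eM` is a left module over the corner ring `eAe`. -/
instance : Module (Corner e he) (eMod e he M) where
  one_smul m := Subtype.ext m.2
  mul_smul c d m := Subtype.ext (mul_smul c.1 d.1 m.1)
  smul_add c m n := Subtype.ext (smul_add c.1 m.1 n.1)
  add_smul c d m := Subtype.ext (add_smul c.1 d.1 m.1)
  zero_smul m := Subtype.ext (zero_smul A m.1)
  smul_zero c := Subtype.ext (smul_zero (c.1 : A))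

@[simp] theorem smul_val (c : Corner e he) (m : eMod e he M) :
    (c • m : eMod e he M).1 = c.1 • m.1 := rfl

end eMod

/-- A simple left `A`-module `S` with `eS ≠ 0` realizing a given `eAe`-module `T` as
`eS ≅ T`. -/
structure SimpleModuleRep (A : Type u) [Ring A] (e : A) (he : e * e = e)
    (T : Type u) [AddCommGroup T] [Module (Corner e he) T] : Type (u + 1) where
  S : Type u
  [instAddCommGroup : AddCommGroup S]
  [instModule : Module A S]
  simple : IsSimpleModule A S
  nonzero : ∃ m : S, e • m ≠ 0
  iso : Nonempty (eMod e he S ≃ₗ[Corner e he] T)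

namespace Stmt18Aux

theorem exists_smul_eq {R M : Type*} [Ring R] [AddCommGroup M] [Module R M]
    (h : IsSimpleModule R M) {x : M} (hx : x ≠ 0) (y : M) : ∃ c : R, c • x = y := by
  have hs : Submodule.span R {x} = ⊤ := by
    rcases h.eq_bot_or_eq_top (Submodule.span R {x}) with hb | htop
    · exact absurd ((Submodule.mem_bot R).mp (hb ▸ Submodule.mem_span_singleton_self x)) hx
    · exact htop
  exact Submodule.mem_span_singleton.mp (hs.symm ▸ Submodule.mem_top)

variable {A : Type*} [Ring A] (e : A) (he : e * e = e)

@[simp] theorem corner_zero_val : ((0 : Corner e he)).1 = 0 := rfl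
@[simp] theorem corner_neg_val (x : Corner e he) : ((-x : Corner e he)).1 = -x.1 := rfl
@[simp] theorem corner_sub_val (x y : Corner e he) : ((x - y : Corner e he)).1 = x.1 - y.1 := by
  rw [sub_eq_add_neg, sub_eq_add_neg]; rfl

/-- The corner projection `a ↦ e*a*e`. -/
def eps (a : A) : Corner e he :=
  ⟨e * a * e, by rw [← mul_assoc, ← mul_assoc, he], by rw [mul_assoc, he]⟩

@[simp] theorem eps_val (a : A) : (eps e he a).1 = e * a * e := rfl

theorem eps_add (a b : A) : eps e he (a + b) = eps e he a + eps e he b :=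
  Subtype.ext (by simp [mul_add, add_mul])

theorem eps_sub (a b : A) : eps e he (a - b) = eps e he a - eps e he b :=
  Subtype.ext (by simp [mul_sub, sub_mul])

theorem eps_zero : eps e he 0 = 0 := Subtype.ext (by simp)

theorem eps_one : eps e he 1 = 1 := Subtype.ext (by simpa using he)

theorem eps_mul_eps (x y : A) : eps e he x * eps e he y = eps e he (x * (e * y)) :=
  Subtype.ext (by
    simp only [Corner.mul_val, eps_val, ← mul_assoc]
    rw [mul_assoc (e * x) e e, he])

theorem eps_mul_corner (y : A) (w : Corner e he) :
    eps e he (y * w.1) = eps e he y * w :=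
  Subtype.ext (by
    simp only [Corner.mul_val, eps_val, ← mul_assoc]
    rw [mul_assoc (e * y) w.1 e, w.2.2, mul_assoc (e * y) e w.1, w.2.1])

variable {T : Type*} [AddCommGroup T] [Module (Corner e he) T]

/-- The left ideal of `a ∈ A` with `(eAa)·t = 0`. -/
def P (t : T) : Submodule A A where
  carrier := {a | ∀ b : A, eps e he (b * a) • t = 0}
  add_mem' := by
    intro x y hx hy b
    rw [mul_add, eps_add, add_smul, hx b, hy b, add_zero]
  zero_mem' := by
    intro b
    rw [mul_zero, eps_zero, zero_smul]
  smul_mem' := by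
    intro c x hx b
    rw [smul_eq_mul, ← mul_assoc]
    exact hx (b * c)

theorem mem_P {t : T} {a : A} : a ∈ P e he t ↔ ∀ b : A, eps e he (b * a) • t = 0 := Iff.rfl

theorem sub_mul_e_mem_P (t : T) (a : A) : a - a * e ∈ P e he t := by
  refine (mem_P e he).mpr fun b => ?_
  have h0 : eps e he (b * (a - a * e)) = 0 := Subtype.ext (by
    simp only [eps_val, corner_zero_val, mul_sub, sub_mul, ← mul_assoc]
    rw [mul_assoc (e * b * a) e e, he, sub_self])
  rw [h0, zero_smul]

/-- The map `e(A/P) → T`. -/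
def phi0 (t : T) : (A ⧸ P e he t) → T :=
  fun x => Quotient.liftOn' x (fun a => eps e he a • t) (fun a b h => by
    have hab : a - b ∈ P e he t := (Submodule.quotientRel_def _).mp h
    have h1 := (mem_P e he).mp hab 1
    rw [one_mul, eps_sub, sub_smul, sub_eq_zero] at h1
    exact h1)

@[simp] theorem phi0_mk (t : T) (a : A) :
    phi0 e he t (Submodule.Quotient.mk a) = eps e he a • t := rfl

/-- The `Corner`-linear map `e(A/P) → T`. -/
def phi (t : T) : eMod e he (A ⧸ P e he t) →ₗ[Corner e he] T where
  toFun m := phi0 e he t m.1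
  map_add' m n := by
    show phi0 e he t (m.1 + n.1) = phi0 e he t m.1 + phi0 e he t n.1
    refine Quotient.inductionOn₂' m.1 n.1 fun a b => ?_
    show phi0 e he t (Submodule.Quotient.mk a + Submodule.Quotient.mk b) = _
    rw [← Submodule.Quotient.mk_add]
    show phi0 e he t (Submodule.Quotient.mk (a + b))
      = phi0 e he t (Submodule.Quotient.mk a) + phi0 e he t (Submodule.Quotient.mk b)
    rw [phi0_mk, phi0_mk, phi0_mk, eps_add, add_smul]
  map_smul' c m := by
    show phi0 e he t (c.1 • m.1) = c • phi0 e he t m.1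
    refine Quotient.inductionOn' m.1 fun a => ?_
    show phi0 e he t (c.1 • Submodule.Quotient.mk a) = c • phi0 e he t (Submodule.Quotient.mk a)
    rw [← Submodule.Quotient.mk_smul, smul_eq_mul, phi0_mk, phi0_mk, ← mul_smul]
    congr 1
    refine Subtype.ext ?_
    simp only [Corner.mul_val, eps_val, ← mul_assoc, c.2.1, c.2.2]

theorem phi_inj (t : T) : Function.Injective (phi e he t) := by
  refine (injective_iff_map_eq_zero _).mpr ?_
  rintro ⟨xq, hxq⟩ hm
  refine Subtype.ext ?_
  show xq = 0
  revert hxq hm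
  refine Quotient.inductionOn' xq fun a => ?_
  intro hxq hm
  show Submodule.Quotient.mk a = (0 : A ⧸ P e he t)
  rw [Submodule.Quotient.mk_eq_zero]
  have hma : eps e he a • t = 0 := hm
  have hea : e * a - a ∈ P e he t := by
    have hxq' : (Submodule.Quotient.mk (e • a) : A ⧸ P e he t) = Submodule.Quotient.mk a := by
      rw [Submodule.Quotient.mk_smul]; exact hxq
    rw [smul_eq_mul] at hxq'
    exact (Submodule.Quotient.eq _).mp hxq'
  refine (mem_P e he).mpr fun b => ?_
  have e2 : b * a = b * (e * a) - b * (e * a - a) := by rw [mul_sub, sub_sub_cancel]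
  rw [e2, eps_sub, sub_smul, ← eps_mul_eps, mul_smul, hma, smul_zero,
    (mem_P e he).mp hea b, sub_self]

theorem phi_surj (t : T) (ht : t ≠ 0) (hT : IsSimpleModule (Corner e he) T) :
    Function.Surjective (phi e he t) := by
  have hmem : (e : A) • (Submodule.Quotient.mk e : A ⧸ P e he t) = Submodule.Quotient.mk e := by
    rw [← Submodule.Quotient.mk_smul, smul_eq_mul, he]
  have htr : phi e he t ⟨Submodule.Quotient.mk e, hmem⟩ = t := by
    show eps e he e • t = t
    rw [show eps e he e = 1 from Subtype.ext (by simp [he]), one_smul]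
  rcases hT.eq_bot_or_eq_top (LinearMap.range (phi e he t)) with hb | htop
  · exfalso
    refine ht ?_
    rw [← htr]
    have : phi e he t ⟨Submodule.Quotient.mk e, hmem⟩ ∈ LinearMap.range (phi e he t) :=
      LinearMap.mem_range_self _ _
    rw [hb, Submodule.mem_bot] at this
    rw [this]
  · exact LinearMap.range_eq_top.mp htop

theorem coatom_P (t : T) (ht : t ≠ 0) (hT : IsSimpleModule (Corner e he) T) :
    IsCoatom (P e he t) := by
  constructor
  · intro htop
    have h1 : (1 : A) ∈ P e he t := htop ▸ Submodule.mem_top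
    have h2 := (mem_P e he).mp h1 1
    rw [mul_one, eps_one, one_smul] at h2
    exact ht h2
  · intro Q hQ
    obtain ⟨a, haQ, haP⟩ := SetLike.exists_of_lt hQ
    rw [mem_P e he] at haP
    push_neg at haP
    obtain ⟨b, hb⟩ := haP
    obtain ⟨c, hc⟩ := exists_smul_eq hT hb t
    set w : Corner e he := c * eps e he (b * a) with hw
    have hwt : w • t = t := by rw [hw, mul_smul, hc]
    rw [eq_top_iff]
    intro x _
    have key : x - x * w.1 ∈ P e he t := by
      refine (mem_P e he).mpr fun b' => ?_
      have e1 : b' * (x - x * w.1) = b' * x - (b' * x) * w.1 := by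
        rw [mul_sub, mul_assoc]
      rw [e1, eps_sub, sub_smul, eps_mul_corner, mul_smul, hwt, sub_self]
    have hz : x * w.1 = (x * c.1 * (e * b) * a) * e := by
      simp only [hw, Corner.mul_val, eps_val, mul_assoc]
    have hzQ : x * c.1 * (e * b) * a ∈ Q := by
      have := Q.smul_mem (x * c.1 * (e * b)) haQ
      rwa [smul_eq_mul] at this
    have hxwQ : x * w.1 ∈ Q := by
      rw [hz]
      have hsub := hQ.le (sub_mul_e_mem_P e he t (x * c.1 * (e * b) * a))
      have := Q.sub_mem hzQ hsub
      simpa using this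
    have hfin := Q.add_mem (hQ.le key) hxwQ
    rwa [sub_add_cancel] at hfin

end Stmt18Aux

/-- Let `A` be a unital ring and `e ∈ A` an idempotent.  The assignment
`S ↦ eS` gives a bijection between isomorphism classes of simple left `A`-modules `S` with
`eS ≠ 0` and isomorphism classes of simple left `eAe`-modules:  (1) for such `S`, `eS` is a
simple `eAe`-module; (2) every simple `eAe`-module arises as `eS` up to isomorphism
(surjectivity); (3) `S` is determined up to isomorphism by `eS` (injectivity). -/
theorem stmt18 {A : Type u} [Ring A] (e : A) (he : e * e = e) :
    (∀ (S : Type u) [AddCommGroup S] [Module A S], IsSimpleModule A S →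
      (∃ m : S, e • m ≠ 0) → IsSimpleModule (Corner e he) (eMod e he S)) ∧
    (∀ (T : Type u) [AddCommGroup T] [Module (Corner e he) T],
      IsSimpleModule (Corner e he) T → Nonempty (SimpleModuleRep A e he T)) ∧
    (∀ (S S' : Type u) [AddCommGroup S] [Module A S] [AddCommGroup S'] [Module A S'],
      IsSimpleModule A S → IsSimpleModule A S' →
      (∃ m : S, e • m ≠ 0) → (∃ m : S', e • m ≠ 0) →
      Nonempty (eMod e he S ≃ₗ[Corner e he] eMod e he S') →
      Nonempty (S ≃ₗ[A] S')) := by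
  refine ⟨?_, ?_, ?_⟩
  · -- (1) eS is simple
    intro S _ _ hS hex
    obtain ⟨m, hm⟩ := hex
    have hx0 : (⟨e • m, by rw [← mul_smul, he]⟩ : eMod e he S) ≠ (0 : eMod e he S) :=
      fun h => hm (congrArg Subtype.val h)
    haveI : Nontrivial (eMod e he S) := ⟨_, 0, hx0⟩
    refine { eq_bot_or_eq_top := fun N => ?_ }
    rcases eq_or_ne N ⊥ with hN | hN
    · exact Or.inl hN
    · refine Or.inr ?_
      obtain ⟨x, hxN, hx1⟩ := (Submodule.ne_bot_iff N).mp hN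
      have hxv : x.1 ≠ 0 := fun h => hx1 (Subtype.ext h)
      rw [eq_top_iff]
      intro y _
      obtain ⟨a, ha⟩ := Stmt18Aux.exists_smul_eq hS hxv y.1
      have hy : y = Stmt18Aux.eps e he a • x := by
        refine Subtype.ext ?_
        show y.1 = (e * a * e) • x.1
        rw [mul_smul, x.2, mul_smul, ha, y.2]
      rw [hy]
      exact N.smul_mem _ hxN
  · -- (2) every simple eAe-module arises
    intro T _ _ hT
    haveI := hT
    haveI : Nontrivial T := IsSimpleModule.nontrivial (Corner e he) T
    obtain ⟨t, ht⟩ := exists_ne (0 : T)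
    have hsimp : IsSimpleModule A (A ⧸ Stmt18Aux.P e he t) :=
      isSimpleModule_iff_isCoatom.mpr (Stmt18Aux.coatom_P e he t ht hT)
    have hnz : ∃ m : A ⧸ Stmt18Aux.P e he t, e • m ≠ 0 := by
      refine ⟨Submodule.Quotient.mk 1, ?_⟩
      rw [← Submodule.Quotient.mk_smul, smul_eq_mul, mul_one, Ne,
        Submodule.Quotient.mk_eq_zero]
      intro hmem
      have h2 := (Stmt18Aux.mem_P e he).mp hmem 1
      rw [one_mul, show Stmt18Aux.eps e he e = 1 from Subtype.ext (by simp [he]),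
        one_smul] at h2
      exact ht h2
    exact ⟨⟨A ⧸ Stmt18Aux.P e he t, hsimp, hnz,
      ⟨LinearEquiv.ofBijective (Stmt18Aux.phi e he t)
        ⟨Stmt18Aux.phi_inj e he t, Stmt18Aux.phi_surj e he t ht hT⟩⟩⟩⟩
  · -- (3) injectivity
    intro S S' _ _ _ _ hS hS' hne hne' hiso
    obtain ⟨f⟩ := hiso
    obtain ⟨m, hm⟩ := hne
    set x : eMod e he S := ⟨e • m, by rw [← mul_smul, he]⟩ with hxdef
    have hx0 : x ≠ 0 := fun h => hm (congrArg Subtype.val h)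
    set y : eMod e he S' := f x with hydef
    have hy0 : y ≠ 0 := fun h => hx0 (by
      have := congrArg f.symm h
      rwa [hydef, f.symm_apply_apply, map_zero] at this)
    have hx1 : x.1 ≠ 0 := fun h => hx0 (Subtype.ext h)
    have hy1 : y.1 ≠ 0 := fun h => hy0 (Subtype.ext h)
    set π : A →ₗ[A] S := LinearMap.toSpanSingleton A S x.1 with hπdef
    set g : A →ₗ[A] S' := LinearMap.toSpanSingleton A S' y.1 with hgdef
    have hπ : Function.Surjective π := by
      intro s
      obtain ⟨a, ha⟩ := Stmt18Aux.exists_smul_eq hS hx1 s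
      exact ⟨a, ha⟩
    have hker : LinearMap.ker π ≤ LinearMap.ker g := by
      intro b hb
      rw [LinearMap.mem_ker, hπdef, LinearMap.toSpanSingleton_apply] at hb
      rw [LinearMap.mem_ker, hgdef, LinearMap.toSpanSingleton_apply]
      by_contra hby
      obtain ⟨c, hc⟩ := Stmt18Aux.exists_smul_eq hS' hby y.1
      set w : Corner e he := Stmt18Aux.eps e he (c * b) with hwdef
      have hwy : w • y = y := by
        refine Subtype.ext ?_
        show (e * (c * b) * e) • y.1 = y.1
        rw [mul_smul, y.2, mul_smul, mul_smul, hc, y.2]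
      have hwx : w • x = x := by
        have h7 := congrArg f.symm hwy
        rw [map_smul, hydef, f.symm_apply_apply] at h7
        exact h7
      have h8 := congrArg Subtype.val hwx
      have h9 : (e * (c * b) * e) • x.1 = x.1 := h8
      rw [mul_smul, x.2, mul_smul, mul_smul, hb, smul_zero, smul_zero] at h9
      exact hx1 h9.symm
    let e₁ := π.quotKerEquivOfSurjective hπ
    let θ : S →ₗ[A] S' := ((LinearMap.ker π).liftQ g hker).comp e₁.symm.toLinearMap
    have hθval : θ (e₁ (Submodule.Quotient.mk 1)) = y.1 := by
      show ((LinearMap.ker π).liftQ g hker) (e₁.symm (e₁ (Submodule.Quotient.mk 1))) = y.1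
      rw [LinearEquiv.symm_apply_apply, Submodule.liftQ_apply, hgdef,
        LinearMap.toSpanSingleton_apply, one_smul]
    have hθ : θ ≠ 0 := by
      intro h0
      rw [h0] at hθval
      exact hy1 ((LinearMap.zero_apply _ : (0 : S →ₗ[A] S') _ = 0) ▸ hθval).symm
    haveI := hS
    haveI := hS'
    rcases θ.bijective_or_eq_zero with hbij | hzero
    · exact ⟨LinearEquiv.ofBijective θ hbij⟩
    · exact absurd hzero hθ
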